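/- The vertex labeling produced by local relabeling with depth γ is a valid labeling for the initial preflow of the push-relabel algorithm: for every residual edge (x,y), d(x) ≤ d(y) + 1. -/

import Mathlib

open scoped Classical

/-- The undirected graph underlying a symmetric capacity function: `x` and `y`
are adjacent iff they are distinct and the edge `(x,y)` has positive capacity. -/
def netGraph {V : Type*} (c : V → V → ℝ) (hsymm : ∀ x y, c x y = c y x) : SimpleGraph V where
  Adj x y := x ≠ y ∧ 0 < c x y
  symm := by
    constructor
    intro x y h
    exact ⟨h.1.symm, by rw [← hsymm x y]; exact h.2⟩
  loopless := ⟨fun x h => h.1 rfl⟩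

/-- The vertex labeling produced by local relabeling with depth `γ` is a valid labeling
for the initial preflow of the push-relabel algorithm: `d(t) = 0`, `d(s) = n`, every
vertex at BFS distance at most `γ` from the sink is labeled with its distance and all
other non-source vertices with `γ + 1`.  The initial preflow saturates exactly the edges
leaving `s`, so the residual edges are the edges `(x,y)` with `x ≠ s` and `c x y > 0`
together with the reverse edges `(x,s)` with `c s x > 0`; for each residual edge `(x,y)`
we have `d x ≤ d y + 1`. -/
theorem local_relabeling_valid {V : Type*} [Fintype V] [DecidableEq V]
    (c : V → V → ℝ) (hsymm : ∀ x y, c x y = c y x) (hnn : ∀ x y, 0 ≤ c x y)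
    (s t : V) (hst : s ≠ t) (γ : ℕ) (hγ : γ < Fintype.card V)
    (d : V → ℕ) (hds : d s = Fintype.card V)
    (hd : ∀ x, x ≠ s →
      d x = if (netGraph c hsymm).Reachable x t
            then min ((netGraph c hsymm).dist x t) (γ + 1) else γ + 1) :
    (∀ x y, x ≠ s → 0 < c x y → d x ≤ d y + 1) ∧
    (∀ x, 0 < c s x → d x ≤ d s + 1) := by

  set G := netGraph c hsymm with hG
  have key : ∀ x, x ≠ s → d x ≤ γ + 1 := by
    intro x hx
    rw [hd x hx]
    split
    · exact min_le_right _ _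
    · exact le_rfl
  have part2 : ∀ x, 0 < c s x → d x ≤ d s + 1 := by
    intro x _
    by_cases hx : x = s
    · subst hx; omega
    · have := key x hx
      omega
  refine ⟨?_, part2⟩
  intro x y hx hcxy
  by_cases hxy : x = y
  · subst hxy; omega
  by_cases hy : y = s
  · subst hy
    have := key x hx
    omega
  have hadj : G.Adj x y := ⟨hxy, hcxy⟩
  rw [hd x hx, hd y hy]
  by_cases hry : G.Reachable y t
  · have hrx : G.Reachable x t := (hadj.reachable).trans hry
    rw [if_pos hrx, if_pos hry]
    obtain ⟨p, hp⟩ := hry.exists_walk_length_eq_dist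
    have htri : G.dist x t ≤ G.dist y t + 1 := by
      have := SimpleGraph.dist_le (SimpleGraph.Walk.cons hadj p)
      simpa [hp, Nat.add_comm] using this
    rcases le_or_gt (G.dist y t) (γ + 1) with h | h
    · calc min (G.dist x t) (γ + 1) ≤ G.dist x t := min_le_left _ _
        _ ≤ G.dist y t + 1 := htri
        _ = min (G.dist y t) (γ + 1) + 1 := by rw [min_eq_left h]
    · have : min (G.dist y t) (γ + 1) = γ + 1 := min_eq_right h.le
      rw [this]
      exact le_trans (min_le_right _ _) (Nat.le_succ _)
  · rw [if_neg hry]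
    by_cases hrx : G.Reachable x t
    · exfalso
      exact hry ((hadj.symm.reachable).trans hrx)
    · rw [if_neg hrx]
      omega
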